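/- Arhangel'skii's theorem: every first countable Lindelöf Hausdorff topological space has cardinality at most 2^{ℵ₀}. -/

import Mathlib

open Set Cardinal Ordinal Filter Topology
open scoped Cardinal

lemma card_closure_le {X : Type} [TopologicalSpace X] [FirstCountableTopology X] [T2Space X]
    (S : Set X) (hS : #S ≤ 𝔠) : #(closure S) ≤ 𝔠 := by
  rcases S.eq_empty_or_nonempty with rfl | hne
  · simp
  have key : ∀ x : closure S, ∃ u : ℕ → S,
      Filter.Tendsto (fun n => (u n : X)) Filter.atTop (nhds (x : X)) := by
    rintro ⟨x, hx⟩
    rcases mem_closure_iff_seq_limit.mp hx with ⟨u, hu1, hu2⟩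
    exact ⟨fun n => ⟨u n, hu1 n⟩, hu2⟩
  choose u hu using key
  have hinj : Function.Injective u := by
    intro a1 a2 hab
    apply Subtype.ext
    exact tendsto_nhds_unique (hab ▸ hu a1) (hu a2)
  calc #(closure S) ≤ #(ℕ → S) := Cardinal.mk_le_of_injective hinj
    _ = #S ^ (ℵ₀ : Cardinal) := by rw [← Cardinal.power_def, Cardinal.mk_nat]
    _ ≤ 𝔠 ^ (ℵ₀ : Cardinal) := Cardinal.power_le_power_right hS
    _ = 𝔠 := Cardinal.continuum_power_aleph0

theorem stmt_6 (X : Type) [TopologicalSpace X] [FirstCountableTopology X] [T2Space X]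
    (hL : ∀ C : Set (Set X), (∀ u ∈ C, IsOpen u) → ⋃₀ C = Set.univ →
      ∃ D ⊆ C, D.Countable ∧ ⋃₀ D = Set.univ) :
    #X ≤ 2 ^ Cardinal.aleph0 := by
  rcases isEmpty_or_nonempty X with hX | hX
  · exact (Cardinal.mk_eq_zero X).trans_le zero_le
  rw [Cardinal.two_power_aleph0]
  obtain ⟨x₀⟩ := hX
  -- countable open neighborhood bases
  have hbex : ∀ x : X, ∃ bx : ℕ → Set X, (∀ n, x ∈ bx n ∧ IsOpen (bx n)) ∧
      ∀ V, IsOpen V → x ∈ V → ∃ n, bx n ⊆ V := by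
    intro x
    obtain ⟨u, hu⟩ := (nhds x).exists_antitone_basis
    refine ⟨fun n => interior (u n), fun n =>
      ⟨mem_interior_iff_mem_nhds.mpr (hu.1.mem_of_mem trivial), isOpen_interior⟩, ?_⟩
    intro V hV hxV
    obtain ⟨n, -, hn⟩ := hu.1.mem_iff.mp (hV.mem_nhds hxV)
    exact ⟨n, interior_subset.trans hn⟩
  choose b hb1 hb2 using hbex
  -- the witness function
  have hwitex : ∀ f : ℕ → X × ℕ, ∃ w : X,
      (⋃ n, b (f n).1 (f n).2) ≠ Set.univ → w ∉ ⋃ n, b (f n).1 (f n).2 := by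
    intro f
    by_cases h : (⋃ n, b (f n).1 (f n).2) = Set.univ
    · exact ⟨x₀, fun h' => absurd h h'⟩
    · obtain ⟨w, hw⟩ := (Set.ne_univ_iff_exists_notMem _).mp h
      exact ⟨w, fun _ => hw⟩
  choose wit hwit using hwitex
  set step : Set X → Set X := fun B =>
    closure (insert x₀ B ∪
      wit '' {f | (∀ n, (f n).1 ∈ B) ∧ (⋃ n, b (f n).1 (f n).2) ≠ Set.univ})
    with hstepdef
  set A : Ordinal → Set X :=
    Ordinal.lt_wf.fix (fun o ih => step (⋃ β, ⋃ h : β < o, ih β h)) with hAdef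
  have hA : ∀ o, A o = step (⋃ β, ⋃ _ : β < o, A β) := fun o =>
    Ordinal.lt_wf.fix_eq _ o
  have hcl : ∀ o, IsClosed (A o) := fun o => by rw [hA]; exact isClosed_closure
  have hsub : ∀ o, (⋃ β, ⋃ _ : β < o, A β) ⊆ A o := fun o => by
    rw [hA]
    exact ((subset_insert _ _).trans subset_union_left).trans subset_closure
  have hmono : ∀ {β o : Ordinal}, β < o → A β ⊆ A o := by
    intro β o h
    exact (subset_iUnion₂ (s := fun β _ => A β) β h).trans (hsub o)
  have hx₀A : ∀ o, x₀ ∈ A o := fun o => by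
    rw [hA]; exact subset_closure (Or.inl (mem_insert _ _))
  have hkey : ∀ (o : Ordinal) (f : ℕ → X × ℕ), (∀ n, (f n).1 ∈ A o) →
      (⋃ n, b (f n).1 (f n).2) ≠ Set.univ → wit f ∈ A (Order.succ o) := by
    intro o f hf hne
    rw [hA]
    refine subset_closure (Or.inr ⟨f, ⟨fun n => ?_, hne⟩, rfl⟩)
    exact mem_iUnion₂.mpr ⟨o, Order.lt_succ o, hf n⟩
  -- cardinality of one step
  have hstepcard : ∀ B : Set X, #B ≤ 𝔠 → #(step B) ≤ 𝔠 := by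
    intro B hB
    rw [hstepdef]
    apply card_closure_le
    refine le_trans (mk_union_le _ _) ?_
    have h1 : #(insert x₀ B : Set X) ≤ 𝔠 :=
      le_trans (mk_insert_le)
        (add_le_of_le aleph0_le_continuum hB (one_le_aleph0.trans aleph0_le_continuum))
    have h2 : #(wit '' {f | (∀ n, (f n).1 ∈ B) ∧
        (⋃ n, b (f n).1 (f n).2) ≠ Set.univ}) ≤ 𝔠 := by
      refine le_trans mk_image_le ?_
      have hinj : Function.Injective
          (fun (g : {f : ℕ → X × ℕ // (∀ n, (f n).1 ∈ B) ∧
              (⋃ n, b (f n).1 (f n).2) ≠ Set.univ}) (n : ℕ) =>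
            ((⟨(g.1 n).1, g.2.1 n⟩ : B), (g.1 n).2)) := by
        intro g1 g2 h
        apply Subtype.ext
        funext n
        have e := congrFun h n
        simp only [Prod.mk.injEq, Subtype.mk.injEq] at e
        exact Prod.ext_iff.mpr e
      refine le_trans (Cardinal.mk_le_of_injective hinj) ?_
      calc #(ℕ → ↥B × ℕ) = #(↥B × ℕ) ^ (ℵ₀ : Cardinal) := by
            rw [← Cardinal.power_def, Cardinal.mk_nat]
        _ ≤ 𝔠 ^ (ℵ₀ : Cardinal) := by
            refine Cardinal.power_le_power_right ?_
            rw [Cardinal.mk_prod, Cardinal.lift_id, Cardinal.lift_id, Cardinal.mk_nat]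
            calc #↥B * ℵ₀ ≤ 𝔠 * 𝔠 := mul_le_mul' hB aleph0_le_continuum
              _ = 𝔠 := Cardinal.mul_eq_self aleph0_le_continuum
        _ = 𝔠 := Cardinal.continuum_power_aleph0
    exact add_le_of_le aleph0_le_continuum h1 h2
  -- cardinality of bounded unions of stages
  have hUcard : ∀ o : Ordinal, o.card ≤ 𝔠 → (∀ β < o, #(A β) ≤ 𝔠) →
      #(⋃ β, ⋃ _ : β < o, A β) ≤ 𝔠 := by
    intro o hocard hstages
    have hrw : (⋃ β, ⋃ _ : β < o, A β)
        = ⋃ i : o.ToType, A ((Ordinal.ToType.mk (o := o)).symm i : Ordinal) := by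
      ext y
      simp only [mem_iUnion]
      constructor
      · rintro ⟨β, hβ, hy⟩
        refine ⟨Ordinal.ToType.mk (o := o) ⟨β, hβ⟩, ?_⟩
        rwa [OrderIso.symm_apply_apply]
      · rintro ⟨i, hy⟩
        exact ⟨_, ((Ordinal.ToType.mk (o := o)).symm i).2, hy⟩
    rw [hrw]
    calc #(⋃ i : o.ToType, A ((Ordinal.ToType.mk (o := o)).symm i : Ordinal))
        ≤ Cardinal.sum fun i : o.ToType =>
            #(A ((Ordinal.ToType.mk (o := o)).symm i : Ordinal)) :=
          Cardinal.mk_iUnion_le_sum_mk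
      _ ≤ Cardinal.sum fun _ : o.ToType => 𝔠 :=
          Cardinal.sum_le_sum _ _ fun i =>
            hstages _ ((Ordinal.ToType.mk (o := o)).symm i).2
      _ = #o.ToType * 𝔠 := Cardinal.sum_const' _ _
      _ ≤ 𝔠 * 𝔠 := by rw [Cardinal.mk_toType]; exact mul_le_mul' hocard le_rfl
      _ = 𝔠 := Cardinal.mul_eq_self aleph0_le_continuum
  have hAcard : ∀ o, o < ((Cardinal.aleph 1).ord) → #(A o) ≤ 𝔠 := by
    intro o
    induction o using Ordinal.induction with
    | _ o ih =>
      intro ho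
      rw [hA]
      apply hstepcard
      exact hUcard o ((Cardinal.lt_ord.mp ho).le.trans aleph_one_le_continuum)
        (fun β hβ => ih β hβ (hβ.trans ho))
  set Atot : Set X := ⋃ o, ⋃ _ : o < ((Cardinal.aleph 1).ord), A o with hAtotdef
  have hAtotcard : #Atot ≤ 𝔠 :=
    hUcard ((Cardinal.aleph 1).ord) (by rw [Cardinal.card_ord]; exact aleph_one_le_continuum)
      (fun β hβ => hAcard β hβ)
  have hcof : ∀ g : ℕ → Ordinal, (∀ n, g n < ((Cardinal.aleph 1).ord)) → ∃ γ, γ < ((Cardinal.aleph 1).ord) ∧ ∀ n, g n < γ := by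
    intro g hg
    refine ⟨Ordinal.lsub g, ?_, fun n => Ordinal.lt_lsub g n⟩
    refine Ordinal.lsub_lt_ord ?_ hg
    rw [Cardinal.mk_nat, Cardinal.isRegular_aleph_one.cof_eq]
    exact aleph0_lt_aleph_one
  have homlim : Order.IsSuccLimit ((Cardinal.aleph 1).ord) := Cardinal.isSuccLimit_ord (aleph0_le_aleph 1)
  have hAtotclosed : IsClosed Atot := by
    refine isClosed_of_closure_subset ?_
    intro x hx
    rcases mem_closure_iff_seq_limit.mp hx with ⟨u, hu1, hu2⟩
    choose β hβ1 hβ2 using fun n => mem_iUnion₂.mp (hu1 n)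
    obtain ⟨γ, hγ, hγ2⟩ := hcof β hβ1
    have hAγ : ∀ n, u n ∈ A γ := fun n => hmono (hγ2 n) (hβ2 n)
    have hxγ : x ∈ A γ := (hcl γ).mem_of_tendsto hu2 (Filter.Eventually.of_forall hAγ)
    exact mem_iUnion₂.mpr ⟨γ, hγ, hxγ⟩
  have h0om : (0 : Ordinal) < ((Cardinal.aleph 1).ord) := by
    rw [Cardinal.lt_ord, Ordinal.card_zero]
    exact aleph_pos 1
  have hx₀tot : x₀ ∈ Atot := mem_iUnion₂.mpr ⟨0, h0om, hx₀A 0⟩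
  have huniv : Atot = Set.univ := by
    by_contra h
    obtain ⟨x, hx⟩ := (Set.ne_univ_iff_exists_notMem _).mp h
    set C : Set (Set X) := insert Atotᶜ {V | ∃ a ∈ Atot, ∃ n, V = b a n ∧ x ∉ V} with hCdef
    have hCopen : ∀ u ∈ C, IsOpen u := by
      rintro V hV
      rcases hV with rfl | ⟨a, -, n, rfl, -⟩
      · exact hAtotclosed.isOpen_compl
      · exact (hb1 a n).2
    have hCcover : ⋃₀ C = Set.univ := by
      rw [Set.eq_univ_iff_forall]
      intro y
      by_cases hy : y ∈ Atot
      · have hyx : y ∈ ({x}ᶜ : Set X) := by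
          simp only [mem_compl_iff, mem_singleton_iff]
          rintro rfl; exact hx hy
        obtain ⟨n, hn⟩ := hb2 y _ isOpen_compl_singleton hyx
        refine ⟨b y n, Or.inr ⟨y, hy, n, rfl, fun hxb => hn hxb rfl⟩, (hb1 y n).1⟩
      · exact ⟨Atotᶜ, Or.inl rfl, hy⟩
    obtain ⟨D, hDC, hDcnt, hDuniv⟩ := hL C hCopen hCcover
    set D' : Set (Set X) := D \ {Atotᶜ} with hD'def
    have hD'mem : ∀ d ∈ D', ∃ a, a ∈ Atot ∧ ∃ m, d = b a m ∧ x ∉ d := by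
      rintro d ⟨hdD, hdne⟩
      rcases hDC hdD with rfl | ⟨a, ha, m, rfl, hxd⟩
      · exact absurd rfl hdne
      · exact ⟨a, ha, m, rfl, hxd⟩
    have hcov : Atot ⊆ ⋃₀ D' := by
      intro y hy
      rw [Set.eq_univ_iff_forall] at hDuniv
      obtain ⟨d, hd, hyd⟩ := hDuniv y
      refine ⟨d, ⟨hd, ?_⟩, hyd⟩
      simp only [mem_singleton_iff]
      rintro rfl
      exact hyd hy
    obtain ⟨d₀, hd₀, -⟩ := hcov hx₀tot
    obtain ⟨g, hg⟩ := (hDcnt.mono diff_subset).exists_eq_range ⟨d₀, hd₀⟩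
    rw [← hD'def] at hg
    have hgD' : ∀ n, g n ∈ D' := fun n => hg ▸ mem_range_self n
    choose a ha m hgm hxg using fun n => hD'mem (g n) (hgD' n)
    choose o' ho'1 ho'2 using fun n => mem_iUnion₂.mp (ha n)
    obtain ⟨γ, hγω, hγ⟩ := hcof o' ho'1
    have haγ : ∀ n, a n ∈ A γ := fun n => hmono (hγ n) (ho'2 n)
    set f : ℕ → X × ℕ := fun n => (a n, m n) with hfdef
    have hUf : (⋃ n, b (f n).1 (f n).2) = ⋃₀ D' := by
      rw [hg, Set.sUnion_range]
      exact iUnion_congr fun n => (hgm n).symm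
    have hne : (⋃ n, b (f n).1 (f n).2) ≠ Set.univ := by
      intro hcontra
      have hxmem : x ∈ ⋃ n, b (f n).1 (f n).2 := hcontra ▸ Set.mem_univ x
      obtain ⟨n, hn⟩ := mem_iUnion.mp hxmem
      exact hxg n ((hgm n) ▸ hn)
    have hw := hkey γ f haγ hne
    have hsucc : Order.succ γ < ((Cardinal.aleph 1).ord) := homlim.succ_lt hγω
    have hwtot : wit f ∈ Atot := mem_iUnion₂.mpr ⟨_, hsucc, hw⟩
    have hwD' : wit f ∈ ⋃₀ D' := hcov hwtot
    rw [← hUf] at hwD'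
    exact hwit f hne hwD'
  rw [← Cardinal.mk_univ, ← huniv]
  exact hAtotcard
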